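/- Let A₀ be an n×n matrix over ℂ whose multiset of eigenvalues (roots of the characteristic polynomial, with multiplicity) is invariant under negation. Define recursively A_{m+1} = fromBlocks A_m 1 1 A_m. Then for every N, the multiset of eigenvalues of A_N is also invariant under negation. (This applies in particular when A₀ is the adjacency matrix of a bipartite regular graph, so the spectrum of every iterated graph cylinder of a bipartite graph is symmetric about 0.) -/

import Mathlib

/-- The index type of the `N`-fold iterated graph cylinder matrix over base index `V`. -/
def CylIdx (V : Type*) : ℕ → Type _
  | 0 => V
  | N + 1 => CylIdx V N ⊕ CylIdx V N

instance instFintypeCylIdx (V : Type*) [Fintype V] : ∀ N, Fintype (CylIdx V N)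
  | 0 => ‹Fintype V›
  | N + 1 => letI := instFintypeCylIdx V N
             inferInstanceAs (Fintype (CylIdx V N ⊕ CylIdx V N))

instance instDecidableEqCylIdx (V : Type*) [DecidableEq V] : ∀ N, DecidableEq (CylIdx V N)
  | 0 => ‹DecidableEq V›
  | N + 1 => letI := instDecidableEqCylIdx V N
             inferInstanceAs (DecidableEq (CylIdx V N ⊕ CylIdx V N))

/-- The iterated graph cylinder matrices: `A_{m+1} = [[A_m, I], [I, A_m]]`. -/
def iterCyl {V : Type*} [DecidableEq V] {R : Type*} [CommRing R] (A₀ : Matrix V V R) :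
    ∀ N : ℕ, Matrix (CylIdx V N) (CylIdx V N) R
  | 0 => A₀
  | N + 1 => Matrix.fromBlocks (iterCyl A₀ N) 1 1 (iterCyl A₀ N)


open Polynomial Matrix

lemma roots_comp_linear (p : ℂ[X]) (hp : p.Monic) (c : ℂ) :
    (p.comp (X + C c)).roots = p.roots.map (fun r => r - c) := by
  conv_lhs => rw [(IsAlgClosed.splits p).eq_prod_roots_of_monic hp]
  rw [multiset_prod_comp, Multiset.map_map]
  have : ((fun q : ℂ[X] => q.comp (X + C c)) ∘ fun r : ℂ => X - C r)
      = fun r : ℂ => X - C (r - c) := by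
    funext r
    simp [sub_comp, map_sub]
    ring
  rw [this, show (fun r : ℂ => X - C (r - c)) = (fun a : ℂ => X - C a) ∘ (fun r => r - c) from rfl,
    ← Multiset.map_map, roots_multiset_prod_X_sub_C]

lemma charmatrix_shift_det {m : Type*} [Fintype m] [DecidableEq m] (A : Matrix m m ℂ)
    (c : ℂ) : (charmatrix A + c • (1 : Matrix m m ℂ[X])).det = A.charpoly.comp (X + C c) := by
  have hmap : charmatrix A + c • (1 : Matrix m m ℂ[X])
      = (charmatrix A).map (aeval (X + C c) : ℂ[X] →ₐ[ℂ] ℂ[X]) := by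
    ext i j
    rcases eq_or_ne i j with rfl | hij
    · simp [Matrix.add_apply, Matrix.smul_apply, Matrix.one_apply, Polynomial.smul_eq_C_mul]
      ring
    · simp [Matrix.add_apply, Matrix.smul_apply, Matrix.one_apply, hij]
  rw [hmap, show (charmatrix A).map ⇑(aeval (X + C c) : ℂ[X] →ₐ[ℂ] ℂ[X])
      = (aeval (X + C c) : ℂ[X] →ₐ[ℂ] ℂ[X]).mapMatrix (charmatrix A) from rfl,
    ← AlgHom.map_det, comp_eq_aeval]
  rfl

lemma block_charpoly {m : Type*} [Fintype m] [DecidableEq m] (A : Matrix m m ℂ) :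
    (Matrix.fromBlocks A 1 1 A).charpoly
      = A.charpoly.comp (X + C (-1)) * A.charpoly.comp (X + C 1) := by
  have hcm : charmatrix (Matrix.fromBlocks A 1 1 A)
      = Matrix.fromBlocks (charmatrix A) (-1) (-1) (charmatrix A) := by
    rw [charmatrix_fromBlocks]
    congr 1 <;> rw [Matrix.map_one _ (map_zero C) (map_one C)]
  set cm := charmatrix A with hcmdef
  have key : Matrix.fromBlocks (1 : Matrix m m ℂ[X]) 1 0 1
        * Matrix.fromBlocks cm (-1) (-1) cm
        * Matrix.fromBlocks 1 (-1) 0 1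
      = Matrix.fromBlocks (cm - 1) 0 (-1) (cm + 1) := by
    simp [Matrix.fromBlocks_multiply, Matrix.mul_one, Matrix.one_mul, sub_eq_add_neg]
    constructor <;> abel
  have hdet : (Matrix.fromBlocks cm (-1) (-1) cm).det
      = (cm - 1).det * (cm + 1).det := by
    have h1 : ((Matrix.fromBlocks 1 1 0 1 : Matrix (m ⊕ m) (m ⊕ m) ℂ[X])).det = 1 := by
      rw [Matrix.det_fromBlocks_zero₂₁]; simp
    have h2 : ((Matrix.fromBlocks 1 (-1) 0 1 : Matrix (m ⊕ m) (m ⊕ m) ℂ[X])).det = 1 := by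
      rw [Matrix.det_fromBlocks_zero₂₁]; simp
    calc (Matrix.fromBlocks cm (-1) (-1) cm).det
        = (Matrix.fromBlocks (1 : Matrix m m ℂ[X]) 1 0 1
            * Matrix.fromBlocks cm (-1) (-1) cm
            * Matrix.fromBlocks 1 (-1) 0 1).det := by
          rw [Matrix.det_mul, Matrix.det_mul, h1, h2, one_mul, mul_one]
      _ = (Matrix.fromBlocks (cm - 1) 0 (-1) (cm + 1)).det := by rw [key]
      _ = (cm - 1).det * (cm + 1).det := Matrix.det_fromBlocks_zero₁₂ _ _ _
  have e1 : (cm - 1).det = A.charpoly.comp (X + C (-1)) := by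
    have := charmatrix_shift_det A (-1)
    rwa [neg_smul, one_smul, ← sub_eq_add_neg] at this
  have e2 : (cm + 1).det = A.charpoly.comp (X + C 1) := by
    have := charmatrix_shift_det A 1
    rwa [one_smul] at this
  rw [Matrix.charpoly, hcm, hdet, e1, e2]


theorem iterCyl_roots_neg_invariant {n : ℕ} (A₀ : Matrix (Fin n) (Fin n) ℂ)
    (h : A₀.charpoly.roots.map (fun x => -x) = A₀.charpoly.roots) (N : ℕ) :
    (iterCyl A₀ N).charpoly.roots.map (fun x => -x) = (iterCyl A₀ N).charpoly.roots := by
  induction N with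
  | zero => exact h
  | succ N ih =>
    have hp : (iterCyl A₀ N).charpoly.Monic := Matrix.charpoly_monic _
    set p := (iterCyl A₀ N).charpoly with hpdef
    have hc : (iterCyl A₀ (N + 1)).charpoly = p.comp (X + C (-1)) * p.comp (X + C 1) := by
      rw [show iterCyl A₀ (N + 1)
          = Matrix.fromBlocks (iterCyl A₀ N) 1 1 (iterCyl A₀ N) from rfl]
      exact block_charpoly _
    have hne : p.comp (X + C (-1)) * p.comp (X + C 1) ≠ 0 :=
      ((hp.comp_X_add_C _).mul (hp.comp_X_add_C _)).ne_zero
    rw [hc, roots_mul hne, roots_comp_linear p hp, roots_comp_linear p hp,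
      Multiset.map_add, Multiset.map_map, Multiset.map_map]
    have e1 : p.roots.map ((fun x => -x) ∘ fun r => r - (-1)) = p.roots.map (fun r => r - 1) := by
      rw [show ((fun x : ℂ => -x) ∘ fun r => r - (-1)) = (fun r => r - 1) ∘ fun x : ℂ => -x by
        funext r; simp; ring, ← Multiset.map_map, ih]
    have e2 : p.roots.map ((fun x => -x) ∘ fun r => r - 1) = p.roots.map (fun r => r - (-1)) := by
      rw [show ((fun x : ℂ => -x) ∘ fun r => r - 1) = (fun r => r - (-1)) ∘ fun x : ℂ => -x by
        funext r; simp; ring, ← Multiset.map_map, ih]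
    rw [e1, e2, add_comm]
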